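/- arXiv:1903.09901 — 3 statements merged into one kernel-verified Lean document; each statement's English description precedes it below -/
import Mathlib

section
/- For every real number x, every y ≥ 0 and every μ > 0, it holds that e^x · y ≤ e^{x²/(2μ²)} + e^{2μ²} · y · exp(μ√(2 log(1+y))). -/
noncomputable def psi (x mu : ℝ) : ℝ := x * Real.exp (mu * Real.sqrt (2 * Real.log (1 + x)))

theorem stmt_0 (x y mu : ℝ) (hy : 0 ≤ y) (hmu : 0 < mu) :
    Real.exp x * y ≤ Real.exp (x ^ 2 / (2 * mu ^ 2)) + Real.exp (2 * mu ^ 2) * psi y mu := by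
  rcases eq_or_lt_of_le hy with h0 | hy'
  · simp [psi, ← h0]
    positivity
  set s := Real.sqrt (2 * Real.log (1 + y)) with hsdef
  have hlog : 0 ≤ Real.log (1 + y) := Real.log_nonneg (by linarith)
  have hs : 0 ≤ s := Real.sqrt_nonneg _
  have hs2 : s ^ 2 = 2 * Real.log (1 + y) := Real.sq_sqrt (by linarith)
  have hpsi : psi y mu = y * Real.exp (mu * s) := rfl
  by_cases h : x ≤ 2 * mu ^ 2 + mu * s
  · have h1 : Real.exp x * y ≤ Real.exp (2 * mu ^ 2) * psi y mu := by
      have hx : Real.exp x ≤ Real.exp (2 * mu ^ 2) * Real.exp (mu * s) := by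
        rw [← Real.exp_add]; exact Real.exp_le_exp.2 h
      calc Real.exp x * y ≤ (Real.exp (2 * mu ^ 2) * Real.exp (mu * s)) * y :=
            mul_le_mul_of_nonneg_right hx hy
        _ = Real.exp (2 * mu ^ 2) * psi y mu := by rw [hpsi]; ring
    have h2 : 0 < Real.exp (x ^ 2 / (2 * mu ^ 2)) := Real.exp_pos _
    linarith
  · push_neg at h
    have hly : Real.log y ≤ Real.log (1 + y) :=
      Real.log_le_log hy' (by linarith)
    have key : x + Real.log y ≤ x ^ 2 / (2 * mu ^ 2) := by
      rw [le_div_iff₀ (by positivity : (0:ℝ) < 2 * mu ^ 2)]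
      nlinarith [sq_nonneg (x - mu * s), sq_nonneg mu, mul_pos hmu hmu,
        mul_nonneg hs hmu.le, sq_nonneg s]
    have h1 : Real.exp x * y ≤ Real.exp (x ^ 2 / (2 * mu ^ 2)) := by
      calc Real.exp x * y = Real.exp (x + Real.log y) := by
            rw [Real.exp_add, Real.exp_log hy']
        _ ≤ _ := Real.exp_le_exp.2 key
    have h2 : 0 ≤ Real.exp (2 * mu ^ 2) * psi y mu := by
      rw [hpsi]; positivity
    linarith
end

section
/- For every fixed μ > 0, the function ψ(·,μ) : [0,∞) → [0,∞) defined by ψ(x,μ) = x·exp(μ√(2 log(1+x))) is convex, i.e. for all λ ∈ [0,1] and x,y ∈ [0,∞), ψ(λx+(1−λ)y, μ) ≤ λψ(x,μ) + (1−λ)ψ(y,μ). -/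
open Real Set

noncomputable def sAux (x : ℝ) : ℝ := Real.sqrt (2 * Real.log (1 + x))

noncomputable def f1 (mu x : ℝ) : ℝ :=
  Real.exp (mu * sAux x) * (1 + mu * (x / ((1 + x) * sAux x)))

noncomputable def f2 (mu x : ℝ) : ℝ :=
  Real.exp (mu * sAux x) * (mu * (1 / ((1 + x) * sAux x))) * (1 + mu * (x / ((1 + x) * sAux x))) +
  Real.exp (mu * sAux x) *
    (mu * ((1 * ((1 + x) * sAux x) - x * (sAux x + 1 / sAux x)) / ((1 + x) * sAux x) ^ 2))

lemma sAux_pos {x : ℝ} (hx : 0 < x) : 0 < sAux x := by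
  have hl : 0 < Real.log (1 + x) := Real.log_pos (by linarith)
  exact Real.sqrt_pos.2 (by linarith)

lemma sAux_sq {x : ℝ} (hx : 0 < x) : sAux x ^ 2 = 2 * Real.log (1 + x) := by
  have hl : 0 < Real.log (1 + x) := Real.log_pos (by linarith)
  exact Real.sq_sqrt (by linarith)

lemma sAux_hasDerivAt {x : ℝ} (hx : 0 < x) :
    HasDerivAt sAux (1 / ((1 + x) * sAux x)) x := by
  have hl : 0 < Real.log (1 + x) := Real.log_pos (by linarith)
  have h1x : (0:ℝ) < 1 + x := by linarith
  have hsp := sAux_pos hx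
  have hlog : HasDerivAt (fun y : ℝ => Real.log (1 + y)) (1 / (1 + x)) x := by
    have := ((hasDerivAt_id x).const_add 1).log (by positivity)
    simpa using this
  have h2l : HasDerivAt (fun y : ℝ => 2 * Real.log (1 + y)) (2 * (1 / (1 + x))) x :=
    hlog.const_mul 2
  have hne : 2 * Real.log (1 + x) ≠ 0 := by positivity
  have h := h2l.sqrt hne
  have heq : 2 * (1 / (1 + x)) / (2 * Real.sqrt (2 * Real.log (1 + x)))
      = 1 / ((1 + x) * sAux x) := by
    have hsne : sAux x ≠ 0 := ne_of_gt hsp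
    rw [show Real.sqrt (2 * Real.log (1 + x)) = sAux x from rfl]
    field_simp
  rw [← heq]
  exact h

lemma psi_hasDerivAt (mu : ℝ) {x : ℝ} (hx : 0 < x) :
    HasDerivAt (fun y => psi y mu) (f1 mu x) x := by
  have hsp := sAux_pos hx
  have h1x : (0:ℝ) < 1 + x := by linarith
  have hsne : sAux x ≠ 0 := ne_of_gt hsp
  have h1ne : (1:ℝ) + x ≠ 0 := ne_of_gt h1x
  have hexp : HasDerivAt (fun y : ℝ => Real.exp (mu * sAux y))
      (Real.exp (mu * sAux x) * (mu * (1 / ((1 + x) * sAux x)))) x := by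
    have := ((sAux_hasDerivAt hx).const_mul mu).exp
    simpa [mul_comm] using this
  have h := (hasDerivAt_id x).mul hexp
  have heq : 1 * Real.exp (mu * sAux x) +
      x * (Real.exp (mu * sAux x) * (mu * (1 / ((1 + x) * sAux x)))) = f1 mu x := by
    unfold f1
    field_simp
  rw [← heq]
  exact h

lemma f1_hasDerivAt (mu : ℝ) {x : ℝ} (hx : 0 < x) :
    HasDerivAt (f1 mu) (f2 mu x) x := by
  have hsp := sAux_pos hx
  have h1x : (0:ℝ) < 1 + x := by linarith
  have hsne : sAux x ≠ 0 := ne_of_gt hsp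
  have h1ne : (1:ℝ) + x ≠ 0 := ne_of_gt h1x
  have hd : HasDerivAt (fun y : ℝ => (1 + y) * sAux y)
      (1 * sAux x + (1 + x) * (1 / ((1 + x) * sAux x))) x :=
    ((hasDerivAt_id x).const_add 1).mul (sAux_hasDerivAt hx)
  have hq : HasDerivAt (fun y : ℝ => y / ((1 + y) * sAux y))
      ((1 * ((1 + x) * sAux x) - x * (1 * sAux x + (1 + x) * (1 / ((1 + x) * sAux x)))) /
        ((1 + x) * sAux x) ^ 2) x :=
    (hasDerivAt_id x).div hd (by positivity)
  have hexp : HasDerivAt (fun y : ℝ => Real.exp (mu * sAux y))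
      (Real.exp (mu * sAux x) * (mu * (1 / ((1 + x) * sAux x)))) x := by
    have := ((sAux_hasDerivAt hx).const_mul mu).exp
    simpa [mul_comm] using this
  have h := hexp.mul ((hq.const_mul mu).const_add 1)
  have heq : Real.exp (mu * sAux x) * (mu * (1 / ((1 + x) * sAux x))) *
        (1 + mu * (x / ((1 + x) * sAux x))) +
      Real.exp (mu * sAux x) *
        (mu * ((1 * ((1 + x) * sAux x) - x * (1 * sAux x + (1 + x) * (1 / ((1 + x) * sAux x)))) /
          ((1 + x) * sAux x) ^ 2)) = f2 mu x := by
    unfold f2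
    field_simp
  have hfun : f1 mu = fun y : ℝ =>
      Real.exp (mu * sAux y) * (1 + mu * (y / ((1 + y) * sAux y))) := rfl
  rw [hfun, ← heq]
  exact h

lemma log_key {x : ℝ} (hx : 0 < x) : x ≤ (1 + x) * Real.log (1 + x) := by
  have h1x : (0:ℝ) < 1 + x := by linarith
  have h := Real.log_le_sub_one_of_pos (show (0:ℝ) < (1 + x)⁻¹ by positivity)
  rw [Real.log_inv] at h
  have hinv : (1 + x) * (1 + x)⁻¹ = 1 := mul_inv_cancel₀ (ne_of_gt h1x)
  nlinarith [mul_le_mul_of_nonneg_left h (le_of_lt h1x)]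

lemma f2_nonneg (mu : ℝ) (hmu : 0 < mu) {x : ℝ} (hx : 0 < x) : 0 ≤ f2 mu x := by
  have hsp := sAux_pos hx
  have hs2 := sAux_sq hx
  have h1x : (0:ℝ) < 1 + x := by linarith
  have hsne : sAux x ≠ 0 := ne_of_gt hsp
  have h1ne : (1:ℝ) + x ≠ 0 := ne_of_gt h1x
  have he : 0 < Real.exp (mu * sAux x) := Real.exp_pos _
  have hxlog := log_key hx
  have hB : 0 ≤ (1 + x) * sAux x ^ 2 + mu * x * sAux x + (sAux x ^ 2 - x) := by
    nlinarith [mul_nonneg (mul_nonneg hmu.le hx.le) hsp.le]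
  have e1 : f2 mu x = Real.exp (mu * sAux x) *
      (mu * ((1 + x) * sAux x ^ 2 + mu * x * sAux x + (sAux x ^ 2 - x)) /
        ((1 + x) ^ 2 * sAux x ^ 3)) := by
    unfold f2
    field_simp
    ring
  rw [e1]
  exact mul_nonneg he.le (div_nonneg (mul_nonneg hmu.le hB) (by positivity))

lemma psi_convexOn (mu : ℝ) (hmu : 0 < mu) :
    ConvexOn ℝ (Ici (0:ℝ)) (fun x => psi x mu) := by
  have hint : interior (Ici (0:ℝ)) = Ioi 0 := interior_Ici
  have hcont : ContinuousOn (fun x => psi x mu) (Ici (0:ℝ)) := by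
    have hlogc : ContinuousOn (fun x : ℝ => Real.log (1 + x)) (Ici 0) := by
      intro x hx
      simp only [mem_Ici] at hx
      have h1x : (1:ℝ) + x ≠ 0 := by positivity
      exact ((Real.continuousAt_log h1x).comp (by fun_prop)).continuousWithinAt
    have h2 : ContinuousOn (fun x : ℝ => Real.exp (mu * Real.sqrt (2 * Real.log (1 + x))))
        (Ici 0) :=
      Real.continuous_exp.comp_continuousOn (continuousOn_const.mul
        (Real.continuous_sqrt.comp_continuousOn (continuousOn_const.mul hlogc)))
    exact (continuousOn_id.mul h2 : ContinuousOn (fun x : ℝ => x * _) _)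
  refine convexOn_of_hasDerivWithinAt2_nonneg (f' := f1 mu) (f'' := f2 mu)
    (convex_Ici 0) hcont ?_ ?_ ?_
  · intro x hx
    rw [hint] at hx ⊢
    exact (psi_hasDerivAt mu hx).hasDerivWithinAt
  · intro x hx
    rw [hint] at hx ⊢
    exact (f1_hasDerivAt mu hx).hasDerivWithinAt
  · intro x hx
    rw [hint] at hx
    exact f2_nonneg mu hmu hx

theorem stmt_1 (mu : ℝ) (hmu : 0 < mu) :
    ∀ l x y : ℝ, 0 ≤ l → l ≤ 1 → 0 ≤ x → 0 ≤ y →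
      psi (l * x + (1 - l) * y) mu ≤ l * psi x mu + (1 - l) * psi y mu := by
  intro l x y hl hl1 hx hy
  have h := psi_convexOn mu hmu
  have := h.2 (mem_Ici.2 hx) (mem_Ici.2 hy) hl (show (0:ℝ) ≤ 1 - l by linarith) (by ring)
  simpa [smul_eq_mul] using this
end

section
/- For every l > 1, every x ≥ 0 and every μ > 0, ψ(l·x, μ) ≤ ψ(l,μ) · ψ(x,μ), where ψ(x,μ) = x·exp(μ√(2 log(1+x))). -/
theorem stmt_3 (l x mu : ℝ) (hl : 1 < l) (hx : 0 ≤ x) (hmu : 0 < mu) :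
    psi (l * x) mu ≤ psi l mu * psi x mu := by
  unfold psi
  have hl0 : (0:ℝ) < l := lt_trans one_pos hl
  rcases eq_or_lt_of_le hx with h0 | hx0
  · simp [← h0]
  have h1 : (0:ℝ) < 1 + l * x := by positivity
  have hlog : Real.log (1 + l * x) ≤ Real.log (1 + l) + Real.log (1 + x) := by
    rw [← Real.log_mul (by positivity) (by positivity)]
    apply Real.log_le_log h1
    nlinarith
  have ha : 0 ≤ 2 * Real.log (1 + l) := by
    have := Real.log_nonneg (by linarith : (1:ℝ) ≤ 1 + l); linarith
  have hb : 0 ≤ 2 * Real.log (1 + x) := by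
    have := Real.log_nonneg (by linarith : (1:ℝ) ≤ 1 + x); linarith
  have hsqrt : Real.sqrt (2 * Real.log (1 + l * x)) ≤
      Real.sqrt (2 * Real.log (1 + l)) + Real.sqrt (2 * Real.log (1 + x)) := by
    have h2 : Real.sqrt (2 * Real.log (1 + l * x)) ≤
        Real.sqrt (2 * Real.log (1 + l) + 2 * Real.log (1 + x)) :=
      Real.sqrt_le_sqrt (by linarith)
    refine h2.trans ?_
    have hs := Real.sq_sqrt ha
    have ht := Real.sq_sqrt hb
    have := Real.sqrt_nonneg (2 * Real.log (1 + l))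
    have := Real.sqrt_nonneg (2 * Real.log (1 + x))
    nlinarith [Real.sqrt_le_sqrt (show 2 * Real.log (1 + l) + 2 * Real.log (1 + x) ≤
        (Real.sqrt (2 * Real.log (1 + l)) + Real.sqrt (2 * Real.log (1 + x)))^2 by nlinarith),
      Real.sqrt_sq (by positivity : (0:ℝ) ≤ Real.sqrt (2 * Real.log (1 + l)) + Real.sqrt (2 * Real.log (1 + x)))]
  have hexp : Real.exp (mu * Real.sqrt (2 * Real.log (1 + l * x))) ≤
      Real.exp (mu * Real.sqrt (2 * Real.log (1 + l))) *
      Real.exp (mu * Real.sqrt (2 * Real.log (1 + x))) := by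
    rw [← Real.exp_add]
    apply Real.exp_le_exp.mpr
    nlinarith
  calc l * x * Real.exp (mu * Real.sqrt (2 * Real.log (1 + l * x)))
      ≤ l * x * (Real.exp (mu * Real.sqrt (2 * Real.log (1 + l))) *
        Real.exp (mu * Real.sqrt (2 * Real.log (1 + x)))) := by
        apply mul_le_mul_of_nonneg_left hexp (by positivity)
    _ = l * Real.exp (mu * Real.sqrt (2 * Real.log (1 + l))) *
        (x * Real.exp (mu * Real.sqrt (2 * Real.log (1 + x)))) := by ring
end
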